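/- arXiv:2407.03065 — 4 statements merged into one kernel-verified Lean document; each statement's English description precedes it below -/
import Mathlib

section
/- Let N and M be positive definite d×d real matrices with N ⪰ M (i.e., N − M positive semidefinite). Then for any vector v ∈ ℝ^d, v^T N v ≤ (det N / det M) · v^T M v. -/
open Matrix

private theorem key {d : ℕ} (A : Matrix (Fin d) (Fin d) ℝ) (hA : A.IsHermitian)
    (h1 : (A - 1).PosSemidef) (w : Fin d → ℝ) :
    w ⬝ᵥ A.mulVec w ≤ A.det * (w ⬝ᵥ w) := by
  set U : Matrix (Fin d) (Fin d) ℝ := (hA.eigenvectorUnitary : Matrix (Fin d) (Fin d) ℝ) with hUdef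
  set D : Matrix (Fin d) (Fin d) ℝ := diagonal (RCLike.ofReal ∘ hA.eigenvalues) with hDdef
  have hsp : A = U * D * star U := hA.spectral_theorem
  have hsU : star U * U = 1 := Unitary.coe_star_mul_self hA.eigenvectorUnitary
  have hUs : U * star U = 1 := Unitary.coe_mul_star_self hA.eigenvectorUnitary
  have conj : ∀ (B : Matrix (Fin d) (Fin d) ℝ) (x : Fin d → ℝ),
      star (U *ᵥ x) ⬝ᵥ (U * B * star U) *ᵥ (U *ᵥ x) = star x ⬝ᵥ B *ᵥ x := by
    intro B x
    rw [star_mulVec, dotProduct_mulVec, vecMul_vecMul]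
    rw [show Uᴴ * (U * B * star U) = B * star U by
      rw [show Uᴴ = star U from rfl, ← mul_assoc, ← mul_assoc, hsU, one_mul]]
    rw [← dotProduct_mulVec, mulVec_mulVec, mul_assoc, hsU, mul_one]
  have heig : ∀ i, 1 ≤ hA.eigenvalues i := by
    intro i
    have h := h1.dotProduct_mulVec_nonneg (U *ᵥ Pi.single i 1)
    have hrw : A - 1 = U * (D - 1) * star U := by
      rw [Matrix.mul_sub, Matrix.sub_mul, mul_one, hUs, ← hsp]
    rw [hrw, conj (D - 1) (Pi.single i 1)] at h
    have : star (Pi.single i 1 : Fin d → ℝ) ⬝ᵥ (D - 1) *ᵥ Pi.single i 1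
        = hA.eigenvalues i - 1 := by
      simp [hDdef, sub_mulVec, dotProduct, mulVec_diagonal, Pi.single_apply,
        one_mulVec, Finset.sum_ite_eq']
    rw [this] at h
    linarith
  set y : Fin d → ℝ := star U *ᵥ w with hy
  have hw : U *ᵥ y = w := by rw [hy, mulVec_mulVec, hUs, one_mulVec]
  have hAq : w ⬝ᵥ A.mulVec w = ∑ i, hA.eigenvalues i * (y i)^2 := by
    have := conj D y
    rw [hw, show star w = w from star_trivial w, show star y = y from star_trivial y] at this
    rw [← hsp] at this
    rw [this]
    simp [hDdef, dotProduct, mulVec_diagonal]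
    exact Finset.sum_congr rfl fun i _ => by ring
  have hww : w ⬝ᵥ w = ∑ i, (y i)^2 := by
    have := conj 1 y
    rw [hw, Matrix.mul_one, hUs, show star w = w from star_trivial w,
      show star y = y from star_trivial y, one_mulVec] at this
    rw [this]
    simp [dotProduct, one_mulVec, sq]
  have hdet : A.det = ∏ i, hA.eigenvalues i := by
    simpa using hA.det_eq_prod_eigenvalues
  rw [hAq, hww, hdet, Finset.mul_sum]
  apply Finset.sum_le_sum
  intro i _
  apply mul_le_mul_of_nonneg_right _ (sq_nonneg _)
  rw [← Finset.mul_prod_erase Finset.univ _ (Finset.mem_univ i)]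
  have hP : (1:ℝ) ≤ ∏ j ∈ Finset.univ.erase i, hA.eigenvalues j := by
    have := Finset.prod_le_prod (s := Finset.univ.erase i)
      (f := fun _ => (1:ℝ)) (g := hA.eigenvalues)
      (fun j _ => zero_le_one) (fun j _ => heig j)
    simpa using this
  exact le_mul_of_one_le_right (le_trans zero_le_one (heig i)) hP

theorem matrix_norm_inequality {d : ℕ} (N M : Matrix (Fin d) (Fin d) ℝ)
    (hN : N.PosDef) (hM : M.PosDef) (hNM : (N - M).PosSemidef)
    (v : Fin d → ℝ) :
    v ⬝ᵥ N.mulVec v ≤ (N.det / M.det) * (v ⬝ᵥ M.mulVec v) := by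
  open scoped MatrixOrder in set S := CFC.sqrt M with hSdef
  have hS : S.PosSemidef := by
    open scoped MatrixOrder in exact (CFC.sqrt_nonneg M).posSemidef
  have hSS : S * S = M := by
    open scoped MatrixOrder in exact CFC.sqrt_mul_sqrt_self M hM.posSemidef.nonneg
  have hST : Sᵀ = S := by
    rw [← conjTranspose_eq_transpose_of_trivial, hS.isHermitian.eq]
  have hdetS : S.det * S.det = M.det := by rw [← det_mul, hSS]
  have hdetS0 : S.det ≠ 0 := by
    intro h
    have := hM.det_pos
    rw [← hdetS, h, mul_zero] at this
    exact lt_irrefl _ this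
  have hSiS : S⁻¹ * S = 1 := nonsing_inv_mul S (isUnit_iff_ne_zero.mpr hdetS0)
  have hSSi : S * S⁻¹ = 1 := mul_nonsing_inv S (isUnit_iff_ne_zero.mpr hdetS0)
  have hSit : (S⁻¹)ᴴ = S⁻¹ := by
    rw [conjTranspose_nonsing_inv, hS.isHermitian.eq]
  set A := S⁻¹ * N * S⁻¹ with hAdef
  have hA : A.IsHermitian := by
    rw [hAdef, IsHermitian, conjTranspose_mul, conjTranspose_mul, hSit, hN.isHermitian.eq,
      mul_assoc]
  have h1 : (A - 1).PosSemidef := by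
    have h := hNM.mul_mul_conjTranspose_same S⁻¹
    rw [hSit] at h
    have heq : S⁻¹ * (N - M) * S⁻¹ = A - 1 := by
      rw [Matrix.mul_sub, Matrix.sub_mul, hAdef]
      congr 1
      rw [← hSS, ← mul_assoc, hSiS, one_mul, hSSi]
    rwa [heq] at h
  have hdetA : A.det = N.det / M.det := by
    rw [hAdef, det_mul, det_mul, det_nonsing_inv, Ring.inverse_eq_inv', ← hdetS]
    field_simp
  have hkey := key A hA h1 (S *ᵥ v)
  have e1 : (S *ᵥ v) ⬝ᵥ A *ᵥ (S *ᵥ v) = v ⬝ᵥ N *ᵥ v := by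
    have hAv : A *ᵥ (S *ᵥ v) = S⁻¹ *ᵥ (N *ᵥ v) := by
      rw [mulVec_mulVec, hAdef, mul_assoc, hSiS, mul_one, ← mulVec_mulVec]
    have hvm1 : (S *ᵥ v) ᵥ* S⁻¹ = v := by
      rw [← mulVec_transpose, transpose_nonsing_inv, hST, mulVec_mulVec, hSiS, one_mulVec]
    rw [hAv, dotProduct_mulVec, hvm1]
  have e2 : (S *ᵥ v) ⬝ᵥ (S *ᵥ v) = v ⬝ᵥ M *ᵥ v := by
    have hvm2 : (S *ᵥ v) ᵥ* S = M *ᵥ v := by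
      rw [← mulVec_transpose, hST, mulVec_mulVec, hSS]
    rw [dotProduct_mulVec, hvm2, dotProduct_comm]
  rw [← e1, ← e2, ← hdetA]
  exact hkey
end

section
/- Let z_1, …, z_T ∈ ℝ^{d} satisfy ‖z_t‖² ≤ λ for all t, where λ > 0, and define V_t = λI + Σ_{s=1}^{t−1} z_s z_s^T. Then Σ_{t=1}^T z_t^T V_t^{-1} z_t ≤ 2 d log(T+1). -/
open Matrix Finset

lemma EP.vecMulVec_mulVec {d : ℕ} (v x : Fin d → ℝ) :
    vecMulVec v v *ᵥ x = (v ⬝ᵥ x) • v := by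
  ext i
  simp only [mulVec, dotProduct, vecMulVec_apply, Pi.smul_apply, smul_eq_mul]
  rw [Finset.sum_mul]
  exact Finset.sum_congr rfl fun j _ => by ring

lemma EP.posSemidef_vecMulVec {d : ℕ} (v : Fin d → ℝ) :
    (vecMulVec v v).PosSemidef := by
  refine Matrix.PosSemidef.of_dotProduct_mulVec_nonneg ?_ ?_
  · ext i j
    simp [conjTranspose_apply, vecMulVec_apply, mul_comm]
  · intro x
    rw [EP.vecMulVec_mulVec]
    simp only [star_trivial, dotProduct_smul, smul_eq_mul]
    have : x ⬝ᵥ v = v ⬝ᵥ x := dotProduct_comm _ _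
    rw [this]
    exact mul_self_nonneg _

lemma EP.posSemidef_sum {d : ℕ} {ι : Type*} (S : Finset ι)
    (f : ι → Matrix (Fin d) (Fin d) ℝ) (h : ∀ i ∈ S, (f i).PosSemidef) :
    (∑ i ∈ S, f i).PosSemidef := by
  classical
  induction S using Finset.cons_induction with
  | empty => simpa using Matrix.PosSemidef.zero
  | cons a s ha ih =>
    rw [Finset.sum_cons]
    exact (h a (Finset.mem_cons_self a s)).add (ih fun i hi => h i (Finset.mem_cons_of_mem hi))

lemma EP.posDef_smul_one {d : ℕ} {lam : ℝ} (hlam : 0 < lam) :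
    (lam • (1 : Matrix (Fin d) (Fin d) ℝ)).PosDef := by
  refine Matrix.PosDef.of_dotProduct_mulVec_pos ?_ ?_
  · ext i j
    simp [conjTranspose_apply, Matrix.one_apply, smul_eq_mul]
    split <;> simp_all [eq_comm]
  · intro x hx
    rw [smul_mulVec, one_mulVec]
    simp only [star_trivial, dotProduct_smul, smul_eq_mul]
    have h1 : 0 < x ⬝ᵥ x := by
      obtain ⟨i, hi⟩ := Function.ne_iff.mp hx
      have : (0:ℝ) < ∑ j, x j * x j :=
        Finset.sum_pos' (fun j _ => mul_self_nonneg _)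
          ⟨i, Finset.mem_univ i, mul_self_pos.mpr hi⟩
      simpa [dotProduct] using this
    positivity

lemma EP.cs {d : ℕ} (v w : Fin d → ℝ) : (v ⬝ᵥ w) ^ 2 ≤ (v ⬝ᵥ v) * (w ⬝ᵥ w) := by
  have := Finset.sum_mul_sq_le_sq_mul_sq Finset.univ v w
  simpa [dotProduct, sq] using this

lemma EP.det_step {d : ℕ} (A : Matrix (Fin d) (Fin d) ℝ) (hA : A.PosDef)
    (v : Fin d → ℝ) :
    det (A + vecMulVec v v) = det A * (1 + v ⬝ᵥ A⁻¹ *ᵥ v) := by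
  have hinv : A * A⁻¹ = 1 := Matrix.mul_nonsing_inv _ hA.det_pos.ne'.isUnit
  have key : A + vecMulVec v v = A * (1 + replicateCol Unit (A⁻¹ *ᵥ v) * replicateRow Unit v) := by
    rw [Matrix.mul_add, mul_one, ← Matrix.mul_assoc, ← Matrix.replicateCol_mulVec,
      Matrix.mulVec_mulVec, hinv, Matrix.one_mulVec, ← Matrix.vecMulVec_eq Unit]
  rw [key, det_mul, Matrix.det_one_add_replicateCol_mul_replicateRow]

lemma EP.a_bounds {d : ℕ} {lam : ℝ} (hlam : 0 < lam)
    (A : Matrix (Fin d) (Fin d) ℝ) (hA : A.PosDef)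
    (hA2 : (A - lam • (1 : Matrix (Fin d) (Fin d) ℝ)).PosSemidef)
    (v : Fin d → ℝ) (hv : v ⬝ᵥ v ≤ lam) :
    0 ≤ v ⬝ᵥ A⁻¹ *ᵥ v ∧ v ⬝ᵥ A⁻¹ *ᵥ v ≤ 1 := by
  set a := v ⬝ᵥ A⁻¹ *ᵥ v with ha
  have h0 : 0 ≤ a := by
    have := hA.inv.posSemidef.dotProduct_mulVec_nonneg v
    simpa [ha] using this
  refine ⟨h0, ?_⟩
  set w := A⁻¹ *ᵥ v with hw
  have hAw : A *ᵥ w = v := by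
    rw [hw, Matrix.mulVec_mulVec, Matrix.mul_nonsing_inv _ hA.det_pos.ne'.isUnit,
      Matrix.one_mulVec]
  have hwn : 0 ≤ w ⬝ᵥ w := by
    have : (0:ℝ) ≤ ∑ j, w j * w j := Finset.sum_nonneg fun j _ => mul_self_nonneg _
    simpa [dotProduct] using this
  have h1 : lam * (w ⬝ᵥ w) ≤ a := by
    have hp := hA2.dotProduct_mulVec_nonneg w
    rw [Matrix.sub_mulVec, dotProduct_sub, smul_mulVec, one_mulVec] at hp
    simp only [star_trivial, dotProduct_smul, smul_eq_mul] at hp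
    have : a = w ⬝ᵥ (A *ᵥ w) := by
      rw [ha, ← hAw]
      rw [dotProduct_comm]
    linarith
  have h2 : a ^ 2 ≤ lam * (w ⬝ᵥ w) := by
    have hcs := EP.cs v w
    have : a = v ⬝ᵥ w := rfl
    nlinarith [hcs, hwn, hv]
  nlinarith [h0, h1, h2]

lemma EP.le_two_log {x : ℝ} (h0 : 0 ≤ x) (h1 : x ≤ 1) :
    x ≤ 2 * Real.log (1 + x) := by
  have hx : (0:ℝ) < 1 + x := by linarith
  have hlog := Real.log_le_sub_one_of_pos (show (0:ℝ) < (1 + x)⁻¹ by positivity)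
  rw [Real.log_inv] at hlog
  have hmul : (1 + x) * (1 + x)⁻¹ = 1 := mul_inv_cancel₀ hx.ne'
  have h3 : (1 + x)⁻¹ ≤ 1 - x / 2 := by nlinarith [hmul, hx]
  linarith

lemma EP.det_le_pow {d : ℕ} (A : Matrix (Fin d) (Fin d) ℝ) (hA : A.PosSemidef)
    (c : ℝ) (hc : (c • (1 : Matrix (Fin d) (Fin d) ℝ) - A).PosSemidef) :
    det A ≤ c ^ d := by
  have hH := hA.isHermitian
  have hdet : det A = ∏ i, hH.eigenvalues i := by
    simpa using hH.det_eq_prod_eigenvalues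
  rw [hdet]
  calc ∏ i, hH.eigenvalues i ≤ ∏ _i : Fin d, c := by
        refine Finset.prod_le_prod (fun i _ => hA.eigenvalues_nonneg i) (fun i _ => ?_)
        set v : Fin d → ℝ := ⇑(hH.eigenvectorBasis i) with hv
        have hAv : A *ᵥ v = hH.eigenvalues i • v := hH.mulVec_eigenvectorBasis i
        have hn : ‖hH.eigenvectorBasis i‖ = 1 := hH.eigenvectorBasis.orthonormal.1 i
        have hnorm : v ⬝ᵥ v = 1 := by
          have h1 : (1:ℝ) = ‖hH.eigenvectorBasis i‖ ^ 2 := by rw [hn]; norm_num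
          rw [EuclideanSpace.norm_eq, Real.sq_sqrt (by positivity)] at h1
          rw [← h1.symm]
          simp [dotProduct, Real.norm_eq_abs, sq_abs, sq, hv]
        have hp := hc.dotProduct_mulVec_nonneg v
        rw [Matrix.sub_mulVec, dotProduct_sub, smul_mulVec, one_mulVec, hAv] at hp
        simp only [star_trivial, dotProduct_smul, smul_eq_mul, hnorm, mul_one] at hp
        linarith
    _ = c ^ d := by simp

lemma EP.psd_smul_sub_vmv {d : ℕ} {lam : ℝ} (hlam : 0 < lam)
    (v : Fin d → ℝ) (hv : v ⬝ᵥ v ≤ lam) :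
    (lam • (1 : Matrix (Fin d) (Fin d) ℝ) - vecMulVec v v).PosSemidef := by
  refine Matrix.PosSemidef.of_dotProduct_mulVec_nonneg ?_ ?_
  · exact (EP.posDef_smul_one hlam).isHermitian.sub (EP.posSemidef_vecMulVec v).isHermitian
  · intro x
    rw [Matrix.sub_mulVec, dotProduct_sub, smul_mulVec, one_mulVec,
      EP.vecMulVec_mulVec]
    simp only [star_trivial, dotProduct_smul, smul_eq_mul]
    have hxx : 0 ≤ x ⬝ᵥ x := by
      have : (0:ℝ) ≤ ∑ j, x j * x j := Finset.sum_nonneg fun j _ => mul_self_nonneg _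
      simpa [dotProduct] using this
    have hcs := EP.cs v x
    have hc : x ⬝ᵥ v = v ⬝ᵥ x := dotProduct_comm _ _
    rw [hc]
    nlinarith [hcs, hxx, hv]

theorem elliptical_potential_sq {d T : ℕ} (lam : ℝ) (hlam : 0 < lam)
    (z : Fin T → Fin d → ℝ) (hz : ∀ t, z t ⬝ᵥ z t ≤ lam)
    (V : Fin T → Matrix (Fin d) (Fin d) ℝ)
    (hV : ∀ t, V t = lam • (1 : Matrix (Fin d) (Fin d) ℝ) +
      ∑ s ∈ Finset.univ.filter (fun s => s < t), vecMulVec (z s) (z s)) :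
    ∑ t, z t ⬝ᵥ (V t)⁻¹.mulVec (z t) ≤ 2 * d * Real.log (T + 1) := by
  classical
  set W : ℕ → Matrix (Fin d) (Fin d) ℝ := fun n =>
    lam • (1 : Matrix (Fin d) (Fin d) ℝ) +
      ∑ s ∈ Finset.univ.filter (fun s : Fin T => (s : ℕ) < n), vecMulVec (z s) (z s)
    with hWdef
  have hWsum : ∀ n, (∑ s ∈ Finset.univ.filter (fun s : Fin T => (s : ℕ) < n),
      vecMulVec (z s) (z s)).PosSemidef :=
    fun n => EP.posSemidef_sum _ _ (fun s _ => EP.posSemidef_vecMulVec (z s))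
  have hWpd : ∀ n, (W n).PosDef := fun n =>
    (EP.posDef_smul_one hlam).add_posSemidef (hWsum n)
  have hWsub : ∀ n, (W n - lam • (1 : Matrix (Fin d) (Fin d) ℝ)).PosSemidef := by
    intro n
    have h : W n - lam • (1 : Matrix (Fin d) (Fin d) ℝ) =
        ∑ s ∈ Finset.univ.filter (fun s : Fin T => (s : ℕ) < n), vecMulVec (z s) (z s) := by
      simp only [hWdef]
      exact add_sub_cancel_left _ _
    rw [h]; exact hWsum n
  have hVW : ∀ t : Fin T, V t = W t.val := by
    intro t
    rw [hV]
    simp only [hWdef]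
    congr 1
  set a : Fin T → ℝ := fun t => z t ⬝ᵥ (W t.val)⁻¹ *ᵥ z t with hadef
  have hab : ∀ t, 0 ≤ a t ∧ a t ≤ 1 := fun t =>
    EP.a_bounds hlam _ (hWpd _) (hWsub _) _ (hz t)
  have hstepW : ∀ t : Fin T, W (t.val + 1) = W t.val + vecMulVec (z t) (z t) := by
    intro t
    simp only [hWdef]
    have hfil : Finset.univ.filter (fun s : Fin T => (s : ℕ) < t.val + 1) =
        insert t (Finset.univ.filter (fun s : Fin T => (s : ℕ) < t.val)) := by
      ext s
      simp only [Finset.mem_filter, Finset.mem_univ, true_and, Finset.mem_insert, Fin.ext_iff]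
      omega
    rw [hfil, Finset.sum_insert (by simp)]
    abel
  set f : ℕ → ℝ := fun n => Real.log (det (W n)) with hfdef
  have hlogstep : ∀ t : Fin T, Real.log (1 + a t) = f (t.val + 1) - f t.val := by
    intro t
    have hd := EP.det_step (W t.val) (hWpd _) (z t)
    rw [← hstepW t] at hd
    rw [hfdef]
    simp only
    rw [hd, Real.log_mul (hWpd t.val).det_pos.ne' (by nlinarith [(hab t).1])]
    ring
  have hsum1 : ∑ t, a t ≤ 2 * ∑ t, Real.log (1 + a t) := by
    rw [Finset.mul_sum]
    exact Finset.sum_le_sum fun t _ => EP.le_two_log (hab t).1 (hab t).2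
  have htel : ∑ t : Fin T, Real.log (1 + a t) = f T - f 0 := by
    calc ∑ t : Fin T, Real.log (1 + a t) = ∑ t : Fin T, (f (t.val + 1) - f t.val) :=
          Finset.sum_congr rfl fun t _ => hlogstep t
      _ = ∑ n ∈ Finset.range T, (f (n + 1) - f n) :=
          Fin.sum_univ_eq_sum_range (fun n => f (n + 1) - f n) T
      _ = f T - f 0 := Finset.sum_range_sub f T
  have hf0 : f 0 = d * Real.log lam := by
    rw [hfdef]
    simp only
    have h : W 0 = lam • (1 : Matrix (Fin d) (Fin d) ℝ) := by
      rw [hWdef]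
      simp
    rw [h, Matrix.det_smul, det_one, mul_one]
    simp [Real.log_pow]
  have hTpos : (0:ℝ) < (T:ℝ) + 1 := by positivity
  have hfT : f T ≤ d * Real.log lam + d * Real.log ((T:ℝ) + 1) := by
    have hbound : det (W T) ≤ (lam * ((T:ℝ) + 1)) ^ d := by
      apply EP.det_le_pow _ (hWpd T).posSemidef
      have hful : Finset.univ.filter (fun s : Fin T => (s : ℕ) < T) =
          (Finset.univ : Finset (Fin T)) := by
        ext s; simp [s.isLt]
      have heq : (lam * ((T:ℝ) + 1)) • (1 : Matrix (Fin d) (Fin d) ℝ) - W T =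
          ∑ s : Fin T, (lam • (1 : Matrix (Fin d) (Fin d) ℝ) - vecMulVec (z s) (z s)) := by
        rw [hWdef]
        simp only [hful]
        rw [Finset.sum_sub_distrib, Finset.sum_const, Finset.card_univ, Fintype.card_fin]
        have h1 : (T : ℕ) • (lam • (1 : Matrix (Fin d) (Fin d) ℝ)) =
            ((T:ℝ) * lam) • (1 : Matrix (Fin d) (Fin d) ℝ) := by
          rw [← Nat.cast_smul_eq_nsmul ℝ, smul_smul]
        have h2 : (lam * ((T:ℝ) + 1)) • (1 : Matrix (Fin d) (Fin d) ℝ) =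
            ((T:ℝ) * lam) • (1 : Matrix (Fin d) (Fin d) ℝ) +
              lam • (1 : Matrix (Fin d) (Fin d) ℝ) := by
          rw [← add_smul]
          ring_nf
        rw [h1, h2]
        abel
      rw [heq]
      exact EP.posSemidef_sum _ _ (fun s _ => EP.psd_smul_sub_vmv hlam (z s) (hz s))
    have hlog := Real.log_le_log (hWpd T).det_pos hbound
    rw [Real.log_pow, Real.log_mul hlam.ne' hTpos.ne'] at hlog
    calc f T = Real.log (det (W T)) := rfl
      _ ≤ d * (Real.log lam + Real.log ((T:ℝ) + 1)) := hlog
      _ = d * Real.log lam + d * Real.log ((T:ℝ) + 1) := by ring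
  calc ∑ t, z t ⬝ᵥ (V t)⁻¹.mulVec (z t) = ∑ t, a t :=
        Finset.sum_congr rfl fun t _ => by rw [hVW t]
    _ ≤ 2 * ∑ t, Real.log (1 + a t) := hsum1
    _ = 2 * (f T - f 0) := by rw [htel]
    _ ≤ 2 * d * Real.log ((T:ℝ) + 1) := by
        rw [hf0] at *
        nlinarith [hfT]
end

section
/- Let y_1,…,y_T ∈ ℝ^A and η > 0 with η·y_t(a) ≥ −1 for all t, a. Define x_1 uniform on [A] and x_{t+1}(a) = x_t(a)e^{−η y_t(a)} / Σ_{a'} x_t(a')e^{−η y_t(a')}. Then for any x in the simplex Δ_A, Σ_{t=1}^T Σ_a y_t(a)(x_t(a) − x(a)) ≤ (log A)/η + η Σ_{t=1}^T Σ_a x_t(a) y_t(a)². -/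
open Finset

lemma exp_neg_le_quad {z : ℝ} (hz : -1 ≤ z) : Real.exp (-z) ≤ 1 - z + z ^ 2 := by
  rcases le_or_gt z 1 with h | h
  · have habs : |(-z)| ≤ 1 := by rw [abs_le]; constructor <;> linarith
    have hb := Real.exp_bound habs (n := 2) (by norm_num)
    have hs : ∑ i ∈ Finset.range 2, (-z) ^ i / (Nat.factorial i) = 1 - z := by
      norm_num [Finset.sum_range_succ]
      ring
    rw [hs] at hb
    have h2 : |(-z)| ^ 2 = z ^ 2 := by rw [sq_abs]; ring
    rw [h2] at hb
    norm_num [Nat.factorial] at hb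
    have := (abs_le.mp hb).2
    nlinarith [sq_nonneg z]
  · have he : 1 + z ≤ Real.exp z := by linarith [Real.add_one_le_exp z]
    have hp : (0:ℝ) < 1 + z := by linarith
    have h1 : Real.exp (-z) ≤ (1 + z)⁻¹ := by
      rw [Real.exp_neg]
      exact inv_anti₀ hp he
    have h2 : (1 + z)⁻¹ ≤ 1 - z + z ^ 2 := by
      rw [inv_le_iff_one_le_mul₀ hp]
      nlinarith
    linarith

theorem hedge_regret (A T : ℕ) (hA : 0 < A) (η : ℝ) (hη : 0 < η)
    (y : ℕ → Fin A → ℝ)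
    (hy : ∀ t ∈ Finset.Icc 1 T, ∀ a, -1 ≤ η * y t a)
    (x : ℕ → Fin A → ℝ)
    (hx1 : ∀ a, x 1 a = 1 / A)
    (hrec : ∀ t ∈ Finset.Icc 1 T, ∀ a, x (t + 1) a =
      x t a * Real.exp (-η * y t a) / ∑ a', x t a' * Real.exp (-η * y t a'))
    (p : Fin A → ℝ) (hp : ∀ a, 0 ≤ p a) (hps : ∑ a, p a = 1) :
    ∑ t ∈ Finset.Icc 1 T, ∑ a, y t a * (x t a - p a) ≤
      Real.log A / η + η * ∑ t ∈ Finset.Icc 1 T, ∑ a, x t a * (y t a) ^ 2 := by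
  -- positivity and normalization of iterates
  have hAR : (0:ℝ) < A := by exact_mod_cast hA
  haveI : Nonempty (Fin A) := ⟨⟨0, hA⟩⟩
  have key : ∀ n, 1 ≤ n → n ≤ T + 1 → (∀ a, 0 < x n a) ∧ (∑ a, x n a = 1) := by
    intro n
    induction n with
    | zero => intro h; omega
    | succ m ih =>
      intro _ hle
      rcases Nat.eq_zero_or_pos m with h1 | h1
      · subst h1
        constructor
        · intro a; rw [hx1]; positivity
        · simp only [hx1]; rw [Finset.sum_const, Finset.card_univ,
            Fintype.card_fin, nsmul_eq_mul]; field_simp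
      · -- m ≥ 1, m ≤ T
        have hm1 : 1 ≤ m := by omega
        have hmT : m ≤ T := by omega
        obtain ⟨hpos, hsum⟩ := ih hm1 (by omega)
        have hmem : m ∈ Finset.Icc 1 T := Finset.mem_Icc.mpr ⟨hm1, hmT⟩
        have hZpos : 0 < ∑ a', x m a' * Real.exp (-η * y m a') := by
          apply Finset.sum_pos
          · intro a _; exact mul_pos (hpos a) (Real.exp_pos _)
          · exact Finset.univ_nonempty
        constructor
        · intro a; rw [hrec m hmem a]
          exact div_pos (mul_pos (hpos a) (Real.exp_pos _)) hZpos
        · have : ∑ a, x (m + 1) a = ∑ a, x m a * Real.exp (-η * y m a) /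
              ∑ a', x m a' * Real.exp (-η * y m a') := by
            apply Finset.sum_congr rfl; intro a _; exact hrec m hmem a
          rw [this, ← Finset.sum_div, div_self (ne_of_gt hZpos)]
  -- the potential
  set Φ : ℕ → ℝ := fun n => ∑ a, p a * Real.log (x n a) with hΦ
  -- per-step inequality
  have step : ∀ t, 1 ≤ t → t ≤ T →
      Φ t + η * (∑ a, y t a * (x t a - p a)) - η ^ 2 * (∑ a, x t a * (y t a) ^ 2)
        ≤ Φ (t + 1) := by
    intro t ht1 htT
    have hmem : t ∈ Finset.Icc 1 T := Finset.mem_Icc.mpr ⟨ht1, htT⟩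
    obtain ⟨hpos, hsum⟩ := key t ht1 (by omega)
    set Z : ℝ := ∑ a', x t a' * Real.exp (-η * y t a') with hZ
    have hZpos : 0 < Z := by
      apply Finset.sum_pos
      · intro a _; exact mul_pos (hpos a) (Real.exp_pos _)
      · exact Finset.univ_nonempty
    -- log Z ≤ -η ∑ x y + η² ∑ x y²
    have hZle : Z ≤ 1 - η * (∑ a, x t a * y t a) + η ^ 2 * (∑ a, x t a * (y t a) ^ 2) := by
      have hb : ∀ a ∈ Finset.univ (α := Fin A), x t a * Real.exp (-η * y t a) ≤
          x t a * (1 - η * y t a + (η * y t a) ^ 2) := by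
        intro a _
        apply mul_le_mul_of_nonneg_left _ (le_of_lt (hpos a))
        have := exp_neg_le_quad (hy t hmem a)
        simpa [neg_mul] using this
      calc Z ≤ ∑ a, x t a * (1 - η * y t a + (η * y t a) ^ 2) :=
            Finset.sum_le_sum hb
        _ = (∑ a, x t a) - η * (∑ a, x t a * y t a) + η ^ 2 * (∑ a, x t a * (y t a) ^ 2) := by
            rw [Finset.mul_sum, Finset.mul_sum, ← Finset.sum_sub_distrib,
              ← Finset.sum_add_distrib]
            apply Finset.sum_congr rfl; intro a _; ring
        _ = 1 - η * (∑ a, x t a * y t a) + η ^ 2 * (∑ a, x t a * (y t a) ^ 2) := by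
            rw [hsum]
    have hlogZ : Real.log Z ≤ - η * (∑ a, x t a * y t a) + η ^ 2 * (∑ a, x t a * (y t a) ^ 2) := by
      have := Real.log_le_sub_one_of_pos hZpos
      linarith
    -- Φ(t+1) = Φ t - η ∑ p y - log Z
    have hΦeq : Φ (t + 1) = Φ t - η * (∑ a, p a * y t a) - Real.log Z := by
      have : ∀ a, p a * Real.log (x (t+1) a)
          = p a * Real.log (x t a) + p a * (-η * y t a) - p a * Real.log Z := by
        intro a
        rw [hrec t hmem a,
          Real.log_div (ne_of_gt (mul_pos (hpos a) (Real.exp_pos _))) (ne_of_gt hZpos),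
          Real.log_mul (ne_of_gt (hpos a)) (ne_of_gt (Real.exp_pos _)), Real.log_exp]
        ring
      simp only [hΦ]
      rw [Finset.sum_congr rfl (fun a _ => this a)]
      rw [Finset.sum_sub_distrib, Finset.sum_add_distrib]
      have e1 : ∑ a, p a * (-η * y t a) = -η * ∑ a, p a * y t a := by
        rw [Finset.mul_sum]; apply Finset.sum_congr rfl; intro a _; ring
      have e2 : ∑ _a : Fin A, p _a * Real.log Z = Real.log Z := by
        rw [← Finset.sum_mul, hps, one_mul]
      rw [e1, e2]; ring
    rw [hΦeq]
    have hexp : ∑ a, y t a * (x t a - p a) = (∑ a, x t a * y t a) - (∑ a, p a * y t a) := by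
      rw [← Finset.sum_sub_distrib]; apply Finset.sum_congr rfl; intro a _; ring
    rw [hexp]
    nlinarith [hlogZ]
  -- main induction
  have main : ∀ n, n ≤ T →
      Φ 1 + η * (∑ t ∈ Finset.Icc 1 n, ∑ a, y t a * (x t a - p a))
        - η ^ 2 * (∑ t ∈ Finset.Icc 1 n, ∑ a, x t a * (y t a) ^ 2) ≤ Φ (n + 1) := by
    intro n
    induction n with
    | zero => intro _; simp
    | succ m ih =>
      intro hle
      have h1 := ih (by omega)
      have h2 := step (m + 1) (by omega) hle
      rw [Finset.sum_Icc_succ_top (by omega : 1 ≤ m + 1),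
        Finset.sum_Icc_succ_top (by omega : 1 ≤ m + 1)]
      linarith
  have hmain := main T le_rfl
  -- Φ 1 = - log A
  have hΦ1 : Φ 1 = - Real.log A := by
    simp only [hΦ, hx1]
    rw [← Finset.sum_mul, hps, one_mul, one_div, Real.log_inv]
  -- Φ (T+1) ≤ 0
  obtain ⟨hposT, hsumT⟩ := key (T + 1) (by omega) le_rfl
  have hΦT : Φ (T + 1) ≤ 0 := by
    apply Finset.sum_nonpos
    intro a _
    apply mul_nonpos_of_nonneg_of_nonpos (hp a)
    apply Real.log_nonpos (le_of_lt (hposT a))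
    calc x (T+1) a ≤ ∑ b, x (T+1) b :=
          Finset.single_le_sum (fun b _ => le_of_lt (hposT b)) (Finset.mem_univ a)
      _ = 1 := hsumT
  rw [hΦ1] at hmain
  rw [div_add' _ _ _ (ne_of_gt hη), le_div_iff₀ hη]
  nlinarith [hmain, hΦT]
end

section
/- Let {X_t}_{t≥1} be a sequence of random variables adapted to a filtration {F_t} with 0 ≤ X_t ≤ 1 almost surely. Then with probability at least 1 − δ, Σ_{t=1}^T E[X_t | F_{t−1}] ≤ 2·Σ_{t=1}^T X_t + 4·log(2/δ). -/
open MeasureTheory Finset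

lemma exp_neg_le_one_sub_half {x : ℝ} (h0 : 0 ≤ x) (h1 : x ≤ 1) :
    Real.exp (-x) ≤ 1 - x / 2 := by
  have hpos := Real.exp_pos x
  have key : 1 ≤ (1 - x / 2) * Real.exp x := by nlinarith [Real.add_one_le_exp x]
  calc Real.exp (-x) = 1 / Real.exp x := by rw [Real.exp_neg, one_div]
    _ ≤ 1 - x / 2 := by rw [div_le_iff₀ hpos]; linarith

theorem multiplicative_concentration
    {Ω : Type*} {m0 : MeasurableSpace Ω} (μ : Measure Ω) [IsProbabilityMeasure μ]
    (ℱ : Filtration ℕ m0) (X : ℕ → Ω → ℝ)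
    (hadapted : Adapted ℱ X)
    (hbdd : ∀ t, ∀ᵐ ω ∂μ, 0 ≤ X t ω ∧ X t ω ≤ 1)
    (T : ℕ) (hT : 1 ≤ T) (δ : ℝ) (hδ : δ ∈ Set.Ioo (0 : ℝ) 1) :
    ENNReal.ofReal (1 - δ) ≤
      μ {ω | ∑ t ∈ Finset.Icc 1 T, (μ[X t | ℱ (t - 1)]) ω ≤
        2 * ∑ t ∈ Finset.Icc 1 T, X t ω + 4 * Real.log (2 / δ)} := by
  obtain ⟨hδ0, hδ1⟩ := hδ
  set Y : ℕ → Ω → ℝ := fun t => μ[X t | ℱ (t - 1)] with hYdef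
  have hXm : ∀ t, StronglyMeasurable (X t) := fun t => ((hadapted t).mono (ℱ.le t) le_rfl).stronglyMeasurable
  have hXint : ∀ t, Integrable (X t) μ := by
    intro t
    refine Integrable.mono' (integrable_const 1) (hXm t).aestronglyMeasurable ?_
    filter_upwards [hbdd t] with ω h
    rw [Real.norm_eq_abs, abs_le]
    constructor <;> linarith [h.1, h.2]
  have hYm : ∀ t, StronglyMeasurable[ℱ (t - 1)] (Y t) := fun t => stronglyMeasurable_condExp
  have hY0 : ∀ t, (0 : Ω → ℝ) ≤ᵐ[μ] Y t := fun t =>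
    condExp_nonneg ((hbdd t).mono fun ω h => h.1)
  have hY1 : ∀ t, Y t ≤ᵐ[μ] fun _ => (1 : ℝ) := by
    intro t
    have h := condExp_mono (m := ℱ (t - 1)) (hXint t) (integrable_const 1)
      ((hbdd t).mono fun ω hw => hw.2)
    rwa [condExp_const (ℱ.le (t - 1))] at h
  have hae : ∀ᵐ ω ∂μ, ∀ t, (0 ≤ X t ω ∧ X t ω ≤ 1) ∧ (0 ≤ Y t ω ∧ Y t ω ≤ 1) := by
    rw [ae_all_iff]
    intro t
    filter_upwards [hbdd t, hY0 t, hY1 t] with ω h h0 h1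
    exact ⟨h, h0, h1⟩
  set f : ℕ → Ω → ℝ := fun n ω => ∑ t ∈ Finset.Icc 1 n, ((1:ℝ)/2 * Y t ω - X t ω) with hfdef
  have hfm : ∀ n, StronglyMeasurable[ℱ n] (f n) := by
    intro n
    apply Finset.stronglyMeasurable_fun_sum
    intro t ht
    rw [Finset.mem_Icc] at ht
    exact (((hYm t).mono (ℱ.mono (le_trans (Nat.sub_le t 1) ht.2))).const_mul _).sub
      (((hadapted t).mono (ℱ.mono ht.2) le_rfl).stronglyMeasurable)
  have hfb : ∀ᵐ ω ∂μ, ∀ n, f n ω ≤ n / 2 := by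
    filter_upwards [hae] with ω h n
    calc f n ω ≤ ∑ t ∈ Finset.Icc 1 n, (1:ℝ)/2 := by
          apply Finset.sum_le_sum
          intro t ht
          obtain ⟨⟨hx0, _⟩, ⟨_, hy1⟩⟩ := h t
          linarith
      _ = (n:ℝ)/2 := by
          rw [Finset.sum_const, Nat.card_Icc, nsmul_eq_mul]
          push_cast
          ring
  have hexp_meas : ∀ n, AEStronglyMeasurable (fun ω => Real.exp (f n ω)) μ := fun n =>
    (Real.continuous_exp.comp_stronglyMeasurable ((hfm n).mono (ℱ.le n))).aestronglyMeasurable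
  have hexp_int : ∀ n, Integrable (fun ω => Real.exp (f n ω)) μ := by
    intro n
    refine Integrable.mono' (integrable_const (Real.exp (n / 2))) (hexp_meas n) ?_
    filter_upwards [hfb] with ω h
    rw [Real.norm_eq_abs, abs_of_pos (Real.exp_pos _)]
    exact Real.exp_le_exp.2 (h n)
  have key : ∀ n, ∫ ω, Real.exp (f n ω) ∂μ ≤ 1 := by
    intro n
    induction n with
    | zero =>
      simp [hfdef]
    | succ n ih =>
      set g : Ω → ℝ := fun ω => Real.exp (f n ω + 1/2 * Y (n+1) ω) with hgdef
      set h : Ω → ℝ := fun ω => Real.exp (-X (n+1) ω) with hhdef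
      have hfsucc : ∀ ω, f (n+1) ω = f n ω + ((1:ℝ)/2 * Y (n+1) ω - X (n+1) ω) := by
        intro ω
        simp only [hfdef]
        rw [Finset.sum_Icc_succ_top (Nat.succ_le_succ (Nat.zero_le n))]
      have hgh : (fun ω => Real.exp (f (n+1) ω)) = g * h := by
        funext ω
        simp only [hgdef, hhdef, Pi.mul_apply, hfsucc ω, ← Real.exp_add]
        congr 1
        ring
      have hgm : StronglyMeasurable[ℱ n] g :=
        Real.continuous_exp.comp_stronglyMeasurable
          ((hfm n).add ((hYm (n+1)).const_mul _))
      have hgb : ∀ᵐ ω ∂μ, 0 ≤ g ω ∧ g ω ≤ Real.exp ((n+1) / 2) := by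
        filter_upwards [hfb, hae] with ω h1 h2
        refine ⟨(Real.exp_pos _).le, Real.exp_le_exp.2 ?_⟩
        have := h1 n
        obtain ⟨_, _, hy1⟩ := h2 (n+1)
        push_cast
        linarith
      have hhb : ∀ᵐ ω ∂μ, 0 ≤ h ω ∧ h ω ≤ 1 := by
        filter_upwards [hbdd (n+1)] with ω hw
        refine ⟨(Real.exp_pos _).le, ?_⟩
        rw [hhdef]
        calc Real.exp (-X (n+1) ω) ≤ Real.exp 0 := Real.exp_le_exp.2 (by linarith [hw.1])
          _ = 1 := Real.exp_zero
      have hh_meas : AEStronglyMeasurable h μ :=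
        (Real.continuous_exp.comp_stronglyMeasurable (hXm (n+1)).neg).aestronglyMeasurable
      have hh_int : Integrable h μ := by
        refine Integrable.mono' (integrable_const 1) hh_meas ?_
        filter_upwards [hhb] with ω hw
        rw [Real.norm_eq_abs, abs_of_nonneg hw.1]
        exact hw.2
      have hgh_int : Integrable (g * h) μ := by
        refine Integrable.mono' (integrable_const (Real.exp ((n+1) / 2)))
          (((hgm.mono (ℱ.le n)).aestronglyMeasurable).mul hh_meas) ?_
        filter_upwards [hgb, hhb] with ω h1 h2
        rw [Pi.mul_apply, Real.norm_eq_abs, abs_of_nonneg (mul_nonneg h1.1 h2.1)]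
        calc g ω * h ω ≤ g ω * 1 := mul_le_mul_of_nonneg_left h2.2 h1.1
          _ = g ω := mul_one _
          _ ≤ Real.exp ((n+1) / 2) := h1.2
      have hpull : μ[g * h | ℱ n] =ᵐ[μ] g * μ[h | ℱ n] :=
        condExp_mul_of_stronglyMeasurable_left hgm hgh_int hh_int
      have hsm : μ[fun ω => (1:ℝ)/2 * X (n+1) ω | ℱ n] =ᵐ[μ] fun ω => (1:ℝ)/2 * Y (n+1) ω := by
        have hc := condExp_smul (μ := μ) (m := ℱ n) ((1:ℝ)/2) (X (n+1))
        have e : (fun ω => (1:ℝ)/2 * X (n+1) ω) = ((1:ℝ)/2) • X (n+1) := by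
          funext ω; simp [smul_eq_mul]
        rw [e]
        refine hc.trans ?_
        filter_upwards with ω
        simp [smul_eq_mul, hYdef]
      have hcond_le : μ[h | ℱ n] ≤ᵐ[μ] fun ω => 1 - (1:ℝ)/2 * Y (n+1) ω := by
        have h1 : μ[h | ℱ n] ≤ᵐ[μ] μ[fun ω => 1 - (1:ℝ)/2 * X (n+1) ω | ℱ n] := by
          refine condExp_mono hh_int ((integrable_const 1).sub ((hXint (n+1)).const_mul _)) ?_
          filter_upwards [hbdd (n+1)] with ω hw
          have := exp_neg_le_one_sub_half hw.1 hw.2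
          simp only [hhdef]
          linarith
        refine h1.trans (Filter.EventuallyEq.le ?_)
        have e1 : (fun ω => 1 - (1:ℝ)/2 * X (n+1) ω) =
            (fun _ : Ω => (1:ℝ)) - fun ω => (1:ℝ)/2 * X (n+1) ω := rfl
        rw [e1]
        refine (condExp_sub (integrable_const 1) ((hXint (n+1)).const_mul _) _).trans ?_
        filter_upwards [hsm] with ω hω
        rw [Pi.sub_apply, condExp_const (ℱ.le n), hω]
      have hstep : μ[g * h | ℱ n] ≤ᵐ[μ] fun ω => Real.exp (f n ω) := by
        filter_upwards [hpull, hcond_le] with ω h1 h2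
        rw [h1, Pi.mul_apply]
        have hg0 : (0:ℝ) ≤ g ω := (Real.exp_pos _).le
        calc g ω * (μ[h | ℱ n]) ω ≤ g ω * (1 - (1:ℝ)/2 * Y (n+1) ω) :=
              mul_le_mul_of_nonneg_left h2 hg0
          _ ≤ g ω * Real.exp (-((1:ℝ)/2 * Y (n+1) ω)) := by
              refine mul_le_mul_of_nonneg_left ?_ hg0
              linarith [Real.add_one_le_exp (-((1:ℝ)/2 * Y (n+1) ω))]
          _ = Real.exp (f n ω) := by
              rw [hgdef, ← Real.exp_add]
              congr 1
              ring
      calc ∫ ω, Real.exp (f (n+1) ω) ∂μ = ∫ ω, (g * h) ω ∂μ := by rw [hgh]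
        _ = ∫ ω, (μ[g * h | ℱ n]) ω ∂μ := (integral_condExp (f := g * h) (ℱ.le n)).symm
        _ ≤ ∫ ω, Real.exp (f n ω) ∂μ := integral_mono_ae integrable_condExp (hexp_int n) hstep
        _ ≤ 1 := ih
  -- Markov
  set A : Set Ω := {ω | 1/δ ≤ Real.exp (f T ω)} with hAdef
  have hAmeas : MeasurableSet A :=
    (Real.continuous_exp.comp_stronglyMeasurable
      ((hfm T).mono (ℱ.le T))).measurable measurableSet_Ici
  have hμA : μ A ≤ ENNReal.ofReal δ := by
    have hmarkov := mul_meas_ge_le_integral_of_nonneg (μ := μ)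
      (f := fun ω => Real.exp (f T ω)) (Filter.Eventually.of_forall fun ω => (Real.exp_pos _).le)
      (hexp_int T) (1/δ)
    have h1 : 1/δ * (μ A).toReal ≤ 1 := le_trans hmarkov (key T)
    have h2 : (μ A).toReal ≤ δ := by
      rw [one_div, inv_mul_eq_div, div_le_one hδ0] at h1
      exact h1
    calc μ A = ENNReal.ofReal (μ A).toReal := (ENNReal.ofReal_toReal (measure_ne_top μ A)).symm
      _ ≤ ENNReal.ofReal δ := ENNReal.ofReal_le_ofReal h2
  have hAcS : ∀ᵐ ω ∂μ, ω ∈ Aᶜ →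
      ω ∈ {ω | ∑ t ∈ Finset.Icc 1 T, (μ[X t | ℱ (t - 1)]) ω ≤
        2 * ∑ t ∈ Finset.Icc 1 T, X t ω + 4 * Real.log (2 / δ)} := by
    filter_upwards [hae] with ω hw hωA
    have hlt : Real.exp (f T ω) < 1/δ := by
      by_contra hc
      exact hωA (le_of_not_gt hc)
    have hlog : f T ω < Real.log (1/δ) :=
      (Real.lt_log_iff_exp_lt (by positivity)).2 hlt
    have hsplit : f T ω = 1/2 * (∑ t ∈ Finset.Icc 1 T, Y t ω) - ∑ t ∈ Finset.Icc 1 T, X t ω := by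
      simp only [hfdef, Finset.sum_sub_distrib, Finset.mul_sum]
    have hlog2 : Real.log (1/δ) ≤ Real.log (2/δ) :=
      Real.log_le_log (by positivity) (by rw [div_le_div_iff₀ hδ0 hδ0]; nlinarith)
    have hlogpos : 0 ≤ Real.log (2/δ) := by
      apply Real.log_nonneg
      rw [le_div_iff₀ hδ0]
      linarith
    show ∑ t ∈ Finset.Icc 1 T, Y t ω ≤ 2 * ∑ t ∈ Finset.Icc 1 T, X t ω + 4 * Real.log (2/δ)
    linarith
  calc ENNReal.ofReal (1 - δ) = 1 - ENNReal.ofReal δ := by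
        rw [ENNReal.ofReal_sub _ hδ0.le, ENNReal.ofReal_one]
      _ ≤ 1 - μ A := tsub_le_tsub_left hμA 1
      _ = μ Aᶜ := (prob_compl_eq_one_sub hAmeas).symm
      _ ≤ _ := measure_mono_ae hAcS
end
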